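/- Let μ and μ' be probability vectors on [n] with μ'_i = μ_i(1+ε_i), |ε_i| ≤ ε ≤ 1, and μ_min = min_i μ_i > 0. Let D, D' be the N×n block indicator matrices for block sizes μ_i N and μ'_i N (both assumed integral), and V = (1/√N) D M^{-1/2}, V' = (1/√N) D' M'^{-1/2} the associated isometries. Then ‖V − V'‖_op ≤ √(3n/μ_min) · √ε. -/

import Mathlib

open scoped BigOperators
open Matrix

/-- The `N × n` block indicator matrix. -/
def blockD (N n : ℕ) (k : Fin n → ℕ) : Matrix (Fin N) (Fin n) ℝ :=
  Matrix.of fun r j =>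
    if (∑ i : Fin n, if (i : ℕ) < (j : ℕ) then k i else 0) ≤ (r : ℕ) ∧
        (r : ℕ) < (∑ i : Fin n, if (i : ℕ) < (j : ℕ) then k i else 0) + k j
    then 1 else 0

/-- The `ℓ² → ℓ²` operator norm of a real matrix. -/
noncomputable def opNorm {m n : ℕ} (A : Matrix (Fin m) (Fin n) ℝ) : ℝ :=
  ‖LinearMap.toContinuousLinearMap (Matrix.toEuclideanLin A)‖

/-- if `μ'_i = μ_i (1 + ε_i)` with `|ε_i| ≤ ε ≤ 1`, then the isometries
`V = (1/√N) D M^{-1/2}` and `V' = (1/√N) D' M'^{-1/2}` satisfy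
`‖V - V'‖_op ≤ √(3n/μ_min) √ε`. -/
lemma opNorm_le_frob {m n : ℕ} (A : Matrix (Fin m) (Fin n) ℝ) :
    opNorm A ≤ Real.sqrt (∑ j, ∑ r, (A r j)^2) := by
  apply ContinuousLinearMap.opNorm_le_bound _ (Real.sqrt_nonneg _)
  intro x
  have hApp : ∀ r, (Matrix.toEuclideanLin A x) r = ∑ j, A r j * x j := by
    intro r; rfl
  have hx : ‖x‖ = Real.sqrt (∑ j, (x j)^2) := by
    rw [EuclideanSpace.norm_eq]
    congr 1; apply Finset.sum_congr rfl; intro j _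
    rw [Real.norm_eq_abs, sq_abs]
  have hfx : ‖LinearMap.toContinuousLinearMap (Matrix.toEuclideanLin A) x‖
      = Real.sqrt (∑ r, (∑ j, A r j * x j)^2) := by
    rw [LinearMap.coe_toContinuousLinearMap', EuclideanSpace.norm_eq]
    congr 1; apply Finset.sum_congr rfl; intro r _
    rw [hApp, Real.norm_eq_abs, sq_abs]
  rw [hfx, hx, ← Real.sqrt_mul (by positivity)]
  apply Real.sqrt_le_sqrt
  calc ∑ r, (∑ j, A r j * x j)^2
      ≤ ∑ r, (∑ j, (A r j)^2) * (∑ j, (x j)^2) := by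
        apply Finset.sum_le_sum
        intro r _
        exact Finset.sum_mul_sq_le_sq_mul_sq _ _ _
    _ = (∑ j, ∑ r, (A r j)^2) * (∑ j, (x j)^2) := by
        rw [← Finset.sum_mul, Finset.sum_comm]

lemma count_block (Nn s m : ℕ) (h : s + m ≤ Nn) :
    ∑ r ∈ Finset.range Nn, (if s ≤ r ∧ r < s + m then (1:ℝ) else 0) = m := by
  rw [Finset.sum_boole]
  have : Finset.filter (fun r => s ≤ r ∧ r < s + m) (Finset.range Nn)
      = Finset.Ico s (s+m) := by
    ext r; simp [Finset.mem_Ico]; omega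
  rw [this, Nat.card_Ico]
  have : s + m - s = m := by omega
  rw [this]

lemma count_inter (Nn s m s' m' : ℕ) (h : s + m ≤ Nn) (h' : s' + m' ≤ Nn) :
    ((min m m' : ℕ) : ℝ) - |(s:ℝ) - s'| ≤
      ∑ r ∈ Finset.range Nn, (if (s ≤ r ∧ r < s + m) ∧ (s' ≤ r ∧ r < s' + m') then (1:ℝ) else 0) := by
  rw [Finset.sum_boole]
  have : Finset.filter (fun r => (s ≤ r ∧ r < s + m) ∧ (s' ≤ r ∧ r < s' + m')) (Finset.range Nn)
      = Finset.Ico (max s s') (min (s+m) (s'+m')) := by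
    ext r; simp [Finset.mem_Ico]; omega
  rw [this, Nat.card_Ico]
  have habs : |(s:ℝ) - s'| = ((max s s' - min s s' : ℕ) : ℝ) := by
    rcases le_total s s' with hss | hss
    · rw [abs_sub_comm, abs_of_nonneg (by have := (Nat.cast_le (α := ℝ)).2 hss; linarith)]
      rw [max_eq_right hss, min_eq_left hss]
      push_cast [Nat.cast_sub hss]; ring
    · rw [abs_of_nonneg (by have := (Nat.cast_le (α := ℝ)).2 hss; linarith)]
      rw [max_eq_left hss, min_eq_right hss]
      push_cast [Nat.cast_sub hss]; ring
  rw [habs]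
  have key : min m m' ≤ (min (s+m) (s'+m') - max s s') + (max s s' - min s s') := by omega
  have h2 := (Nat.cast_le (α := ℝ)).2 key
  push_cast at h2 ⊢
  linarith

set_option maxHeartbeats 1000000 in
lemma key_ineq (μv μv' μm ε t I Nr : ℝ) (hNr : 0 < Nr)
    (hμm : 0 < μm) (hμm2 : μm ≤ 1/2) (hmle : μm ≤ μv) (hμ1 : μv ≤ 1)
    (hε1 : ε ≤ 1) (ht : |t| ≤ ε) (heq : μv' = μv * (1 + t)) (hμ'pos : 0 < μv')
    (hI0 : 0 ≤ I) (hI : Nr * min μv μv' - ε * Nr * (1 - μv) ≤ I) :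
    2 - 2 * (I / (Nr * Real.sqrt (μv * μv'))) ≤ 3 * ε / μm := by
  have hε0 : 0 ≤ ε := le_trans (abs_nonneg t) ht
  have htabs := abs_le.mp ht
  have hμv : 0 < μv := lt_of_lt_of_le hμm hmle
  have hu : 0 < 1 + t := by
    rcases mul_pos_iff.mp (heq ▸ hμ'pos) with ⟨_, h⟩ | ⟨h, _⟩
    · exact h
    · linarith
  have hs : Real.sqrt (μv * μv') = μv * Real.sqrt (1 + t) := by
    rw [heq, show μv * (μv * (1 + t)) = μv^2 * (1+t) by ring,
      Real.sqrt_mul (by positivity), Real.sqrt_sq hμv.le]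
  set w := Real.sqrt (1 + t) with hw
  have hw0 : 0 < w := Real.sqrt_pos.2 hu
  have hw2 : w^2 = 1 + t := Real.sq_sqrt hu.le
  have hNs : 0 < Nr * Real.sqrt (μv * μv') := by rw [hs]; positivity
  rcases le_or_gt (1/3 : ℝ) ε with hc | hc
  · have h1 : 0 ≤ I / (Nr * Real.sqrt (μv * μv')) := div_nonneg hI0 hNs.le
    have h2 : (2:ℝ) ≤ 3 * ε / μm := by
      rw [le_div_iff₀ hμm]; nlinarith
    linarith
  · have hu23 : (2/3 : ℝ) ≤ 1 + t := by linarith [htabs.1]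
    have hw45 : (4/5 : ℝ) ≤ w := by
      rw [hw, show (4/5 : ℝ) = Real.sqrt ((4/5)^2) by rw [Real.sqrt_sq (by norm_num)]]
      apply Real.sqrt_le_sqrt; nlinarith
    have hmin : (1 - ε) * (μv * w) ≤ min μv μv' := by
      rcases le_total (1 + t) 1 with hu1 | hu1
      · have hmineq : min μv μv' = μv * (1 + t) := by
          rw [heq, min_eq_right]; nlinarith
        have hw1e : 1 - ε ≤ w := by
          rw [hw, show (1 - ε : ℝ) = Real.sqrt ((1-ε)^2) by
            rw [Real.sqrt_sq (by linarith)]]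
          apply Real.sqrt_le_sqrt; nlinarith [htabs.1]
        have h2 : (1 - ε) * w ≤ 1 + t := by nlinarith
        rw [hmineq]
        calc (1-ε)*(μv*w) = μv*((1-ε)*w) := by ring
          _ ≤ μv*(1+t) := mul_le_mul_of_nonneg_left h2 hμv.le
      · have hmineq : min μv μv' = μv := by
          rw [heq, min_eq_left]; nlinarith
        have hx0 : (0:ℝ) ≤ (1-ε)*w := mul_nonneg (by linarith) hw0.le
        have ha : (1-ε)^2*(1+t) ≤ (1-ε)^2*(1+ε) :=
          mul_le_mul_of_nonneg_left (by linarith [htabs.2]) (sq_nonneg _)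
        have hb : (1-ε)^2*(1+ε) ≤ 1 := by
          nlinarith [mul_le_mul_of_nonneg_left hε1 (mul_nonneg hε0 hε0)]
        have h1 : ((1-ε)*w)^2 ≤ 1 := by
          calc ((1-ε)*w)^2 = (1-ε)^2*(1+t) := by rw [mul_pow, hw2]
            _ ≤ 1 := le_trans ha hb
        have h2 : (1-ε)*w ≤ 1 := by nlinarith [h1, hx0]
        rw [hmineq]
        calc (1-ε)*(μv*w) = μv*((1-ε)*w) := by ring
          _ ≤ μv*1 := mul_le_mul_of_nonneg_left h2 hμv.le
          _ = μv := mul_one μv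
    have hIdiv : (min μv μv' - ε * (1 - μv)) / (μv * w) ≤ I / (Nr * Real.sqrt (μv * μv')) := by
      rw [div_le_div_iff₀ (by positivity) hNs, hs]
      calc (min μv μv' - ε * (1 - μv)) * (Nr * (μv * w))
          = (Nr * min μv μv' - ε * Nr * (1 - μv)) * (μv * w) := by ring
        _ ≤ I * (μv * w) := mul_le_mul_of_nonneg_right hI (by positivity)
    have hsplit : (min μv μv' - ε*(1-μv)) / (μv*w)
        = min μv μv'/(μv*w) - ε*(1-μv)/(μv*w) := sub_div _ _ _
    have hmindiv : 1 - ε ≤ min μv μv' / (μv * w) := by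
      rw [le_div_iff₀ (by positivity)]; exact hmin
    have hc0 : 0 ≤ ε*(1-μv)/μv := by
      apply div_nonneg _ hμv.le; nlinarith
    have hw54 : ε*(1-μv)/(μv*w) ≤ (5/4) * (ε*(1-μv)/μv) := by
      rw [show ε*(1-μv)/(μv*w) = (ε*(1-μv)/μv)/w by rw [div_div],
        div_le_iff₀ hw0]
      nlinarith
    have e1 : ε*(1-μv)/μv ≤ ε*(1-μm)/μm := by
      rw [div_le_div_iff₀ hμv hμm]
      nlinarith [mul_le_mul_of_nonneg_left hmle hε0]
    have h3 : 3*ε/μm = (5/2)*(ε*(1-μm)/μm) + (1/2)*(ε/μm) + (5/2)*ε := by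
      field_simp; ring
    have h4 : 0 ≤ ε/μm := div_nonneg hε0 hμm.le
    linarith
set_option maxHeartbeats 1600000 in
theorem V_perturbation_bound (N n : ℕ) (hN : 0 < N) (hn : 0 < n)
    (μ μ' : Fin n → ℝ) (hμpos : ∀ i, 0 < μ i) (hμ'pos : ∀ i, 0 < μ' i)
    (hμsum : ∑ i, μ i = 1) (hμ'sum : ∑ i, μ' i = 1)
    (ε : ℝ) (hε1 : ε ≤ 1) (εi : Fin n → ℝ) (hεi : ∀ i, |εi i| ≤ ε)
    (hμ' : ∀ i, μ' i = μ i * (1 + εi i))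
    (k k' : Fin n → ℕ) (hkpos : ∀ i, 0 < k i) (hk'pos : ∀ i, 0 < k' i)
    (hk : ∀ i, (k i : ℝ) = μ i * N) (hk' : ∀ i, (k' i : ℝ) = μ' i * N)
    (hksum : ∑ i, k i = N) (hk'sum : ∑ i, k' i = N)
    (μmin : ℝ) (hμmin : IsLeast (Set.range μ) μmin)
    (V V' : Matrix (Fin N) (Fin n) ℝ)
    (hV : V = (Real.sqrt N)⁻¹ •
        (blockD N n k * Matrix.diagonal fun i => (Real.sqrt (μ i))⁻¹))
    (hV' : V' = (Real.sqrt N)⁻¹ •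
        (blockD N n k' * Matrix.diagonal fun i => (Real.sqrt (μ' i))⁻¹)) :
    opNorm (V - V') ≤ Real.sqrt (3 * n / μmin) * Real.sqrt ε := by
  have hε0 : 0 ≤ ε := le_trans (abs_nonneg _) (hεi ⟨0, hn⟩)
  obtain ⟨hμm_mem, hμm_lb⟩ := hμmin
  obtain ⟨i0, hi0⟩ := hμm_mem
  have hμminpos : 0 < μmin := hi0 ▸ hμpos i0
  have hμminle : ∀ i, μmin ≤ μ i := fun i => hμm_lb ⟨i, rfl⟩
  have hNpos : (0:ℝ) < N := by exact_mod_cast hN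
  have hRHS0 : (0:ℝ) ≤ Real.sqrt (3*n/μmin) * Real.sqrt ε := by positivity
  rcases Nat.lt_or_ge n 2 with hn2 | hn2
  · -- n = 1 : V = V'
    have hn1 : n = 1 := by omega
    subst hn1
    have hμ0 : μ 0 = 1 := by simpa using hμsum
    have hμ'0 : μ' 0 = 1 := by simpa using hμ'sum
    have hkk' : k = k' := by
      funext i
      have h1 : k 0 = N := by simpa using hksum
      have h2 : k' 0 = N := by simpa using hk'sum
      have : i = 0 := Subsingleton.elim _ _
      rw [this, h1, h2]
    have hμμ' : μ = μ' := by
      funext i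
      have : i = 0 := Subsingleton.elim _ _
      rw [this, hμ0, hμ'0]
    have hVV : V = V' := by rw [hV, hV', hkk', hμμ']
    rw [hVV, sub_self]
    have h0 : opNorm (0 : Matrix (Fin N) (Fin 1) ℝ) = 0 := by
      unfold opNorm
      simp
    rw [h0]
    exact hRHS0
  · -- main case
    have hμle1 : ∀ i, μ i ≤ 1 := by
      intro i
      rw [← hμsum]
      exact Finset.single_le_sum (fun j _ => (hμpos j).le) (Finset.mem_univ i)
    have hμminhalf : μmin ≤ 1/2 := by
      have hsum : (n:ℝ) * μmin ≤ 1 := by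
        rw [← hμsum]
        calc (n:ℝ) * μmin = ∑ _i : Fin n, μmin := by
              rw [Finset.sum_const, Finset.card_univ, Fintype.card_fin, nsmul_eq_mul]
          _ ≤ ∑ i, μ i := Finset.sum_le_sum fun i _ => hμminle i
      have h2n : (2:ℝ) ≤ n := by exact_mod_cast hn2
      nlinarith
    -- block starts
    have hSk : ∀ j : Fin n, (∑ i : Fin n, if (i:ℕ) < (j:ℕ) then k i else 0) + k j ≤ N := by
      intro j
      have heq : (∑ i : Fin n, if (i:ℕ) < (j:ℕ) then k i else 0) + k j
          = ∑ i : Fin n, ((if (i:ℕ) < (j:ℕ) then k i else 0) + if i = j then k i else 0) := by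
        rw [Finset.sum_add_distrib]
        congr 1
        simp
      rw [heq, ← hksum]
      apply Finset.sum_le_sum
      intro i _
      split_ifs with h1 h2 <;> first | (subst h2; omega) | omega
    have hS'k : ∀ j : Fin n, (∑ i : Fin n, if (i:ℕ) < (j:ℕ) then k' i else 0) + k' j ≤ N := by
      intro j
      have heq : (∑ i : Fin n, if (i:ℕ) < (j:ℕ) then k' i else 0) + k' j
          = ∑ i : Fin n, ((if (i:ℕ) < (j:ℕ) then k' i else 0) + if i = j then k' i else 0) := by
        rw [Finset.sum_add_distrib]
        congr 1
        simp
      rw [heq, ← hk'sum]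
      apply Finset.sum_le_sum
      intro i _
      split_ifs with h1 h2 <;> first | (subst h2; omega) | omega
    have hμsumlt : ∀ j : Fin n, (∑ i : Fin n, if (i:ℕ) < (j:ℕ) then μ i else 0) ≤ 1 - μ j := by
      intro j
      have heq : (∑ i : Fin n, if (i:ℕ) < (j:ℕ) then μ i else 0) + μ j
          = ∑ i : Fin n, ((if (i:ℕ) < (j:ℕ) then μ i else 0) + if i = j then μ i else 0) := by
        rw [Finset.sum_add_distrib]
        congr 1
        simp
      have hle : (∑ i : Fin n, if (i:ℕ) < (j:ℕ) then μ i else 0) + μ j ≤ 1 := by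
        rw [heq, ← hμsum]
        apply Finset.sum_le_sum
        intro i _
        split_ifs with h1 h2
        · subst h2; exact absurd h1 (lt_irrefl _)
        · simp
        · linarith [hμpos i]
        · linarith [hμpos i]
      linarith
    -- difference of starts
    have hdiff : ∀ j : Fin n,
        |((∑ i : Fin n, if (i:ℕ) < (j:ℕ) then k i else 0 : ℕ) : ℝ)
          - ((∑ i : Fin n, if (i:ℕ) < (j:ℕ) then k' i else 0 : ℕ) : ℝ)| ≤ ε * N * (1 - μ j) := by
      intro j
      have hcast : ((∑ i : Fin n, if (i:ℕ) < (j:ℕ) then k i else 0 : ℕ) : ℝ)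
          - ((∑ i : Fin n, if (i:ℕ) < (j:ℕ) then k' i else 0 : ℕ) : ℝ)
          = ∑ i : Fin n, (if (i:ℕ) < (j:ℕ) then ((k i : ℝ) - (k' i : ℝ)) else 0) := by
        push_cast
        rw [← Finset.sum_sub_distrib]
        apply Finset.sum_congr rfl
        intro i _
        split_ifs <;> simp
      rw [hcast]
      refine le_trans (Finset.abs_sum_le_sum_abs _ _) ?_
      have hbound : ∀ i : Fin n,
          |if (i:ℕ) < (j:ℕ) then ((k i : ℝ) - (k' i : ℝ)) else 0|
            ≤ (if (i:ℕ) < (j:ℕ) then ε * N * μ i else 0) := by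
        intro i
        split_ifs with h
        · rw [hk i, hk' i, hμ' i]
          have heq2 : μ i * N - μ i * (1 + εi i) * N = -(μ i * εi i * N) := by ring
          rw [heq2, abs_neg, abs_mul, abs_mul, abs_of_nonneg (hμpos i).le,
            abs_of_nonneg hNpos.le]
          have hmul := mul_le_mul_of_nonneg_left (hεi i) (mul_nonneg (hμpos i).le hNpos.le)
          nlinarith [hmul]
        · simp
      refine le_trans (Finset.sum_le_sum fun i _ => hbound i) ?_
      have hfac : ∑ i : Fin n, (if (i:ℕ) < (j:ℕ) then ε * N * μ i else 0)
          = ε * N * ∑ i : Fin n, (if (i:ℕ) < (j:ℕ) then μ i else 0) := by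
        rw [Finset.mul_sum]
        apply Finset.sum_congr rfl
        intro i _
        split_ifs <;> ring
      rw [hfac]
      have h2 := hμsumlt j
      nlinarith [hε0, hNpos.le, mul_nonneg hε0 hNpos.le]
    -- reduce to column bound
    refine le_trans (opNorm_le_frob (V - V')) ?_
    rw [show Real.sqrt (3*n/μmin) * Real.sqrt ε = Real.sqrt (3*n/μmin * ε) from
      (Real.sqrt_mul (by positivity) ε).symm]
    apply Real.sqrt_le_sqrt
    have colbound : ∀ j ∈ Finset.univ, ∑ r : Fin N, ((V - V') r j)^2 ≤ 3*ε/μmin := by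
      intro j _
      set a := (Real.sqrt N)⁻¹ * (Real.sqrt (μ j))⁻¹ with ha
      set b := (Real.sqrt N)⁻¹ * (Real.sqrt (μ' j))⁻¹ with hb
      have hentry : ∀ r, (V - V') r j
          = a * blockD N n k r j - b * blockD N n k' r j := by
        intro r
        rw [Matrix.sub_apply, hV, hV', Matrix.smul_apply, Matrix.smul_apply,
          Matrix.mul_diagonal, Matrix.mul_diagonal, smul_eq_mul, smul_eq_mul, ha, hb]
        ring
      have hsq : ∀ r, ((V - V') r j)^2
          = a^2 * blockD N n k r j + b^2 * blockD N n k' r j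
            - 2*(a*b) * (blockD N n k r j * blockD N n k' r j) := by
        intro r
        rw [hentry r]
        have h1 : blockD N n k r j = 1 ∨ blockD N n k r j = 0 := by
          unfold blockD; simp only [Matrix.of_apply]; split_ifs <;> simp
        have h2 : blockD N n k' r j = 1 ∨ blockD N n k' r j = 0 := by
          unfold blockD; simp only [Matrix.of_apply]; split_ifs <;> simp
        rcases h1 with h1 | h1 <;> rcases h2 with h2 | h2 <;> rw [h1, h2] <;> ring
      have hsum1 : ∑ r : Fin N, blockD N n k r j = ((k j : ℕ) : ℝ) := by
        calc ∑ r : Fin N, blockD N n k r j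
            = ∑ r ∈ Finset.range N,
                (if (∑ i : Fin n, if (i:ℕ) < (j:ℕ) then k i else 0) ≤ r ∧
                  r < (∑ i : Fin n, if (i:ℕ) < (j:ℕ) then k i else 0) + k j
                 then (1:ℝ) else 0) :=
              Fin.sum_univ_eq_sum_range (fun r =>
                if (∑ i : Fin n, if (i:ℕ) < (j:ℕ) then k i else 0) ≤ r ∧
                  r < (∑ i : Fin n, if (i:ℕ) < (j:ℕ) then k i else 0) + k j
                then (1:ℝ) else 0) N
          _ = ((k j : ℕ) : ℝ) := count_block N _ (k j) (hSk j)
      have hsum2 : ∑ r : Fin N, blockD N n k' r j = ((k' j : ℕ) : ℝ) := by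
        calc ∑ r : Fin N, blockD N n k' r j
            = ∑ r ∈ Finset.range N,
                (if (∑ i : Fin n, if (i:ℕ) < (j:ℕ) then k' i else 0) ≤ r ∧
                  r < (∑ i : Fin n, if (i:ℕ) < (j:ℕ) then k' i else 0) + k' j
                 then (1:ℝ) else 0) :=
              Fin.sum_univ_eq_sum_range (fun r =>
                if (∑ i : Fin n, if (i:ℕ) < (j:ℕ) then k' i else 0) ≤ r ∧
                  r < (∑ i : Fin n, if (i:ℕ) < (j:ℕ) then k' i else 0) + k' j
                then (1:ℝ) else 0) N
          _ = ((k' j : ℕ) : ℝ) := count_block N _ (k' j) (hS'k j)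
      have hcross : ∑ r : Fin N, blockD N n k r j * blockD N n k' r j
          = ∑ r ∈ Finset.range N,
              (if ((∑ i : Fin n, if (i:ℕ) < (j:ℕ) then k i else 0) ≤ r ∧
                    r < (∑ i : Fin n, if (i:ℕ) < (j:ℕ) then k i else 0) + k j) ∧
                  ((∑ i : Fin n, if (i:ℕ) < (j:ℕ) then k' i else 0) ≤ r ∧
                    r < (∑ i : Fin n, if (i:ℕ) < (j:ℕ) then k' i else 0) + k' j)
               then (1:ℝ) else 0) := by
        calc ∑ r : Fin N, blockD N n k r j * blockD N n k' r j
            = ∑ r ∈ Finset.range N,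
                ((if (∑ i : Fin n, if (i:ℕ) < (j:ℕ) then k i else 0) ≤ r ∧
                    r < (∑ i : Fin n, if (i:ℕ) < (j:ℕ) then k i else 0) + k j
                  then (1:ℝ) else 0) *
                 (if (∑ i : Fin n, if (i:ℕ) < (j:ℕ) then k' i else 0) ≤ r ∧
                    r < (∑ i : Fin n, if (i:ℕ) < (j:ℕ) then k' i else 0) + k' j
                  then (1:ℝ) else 0)) :=
              Fin.sum_univ_eq_sum_range (fun r =>
                (if (∑ i : Fin n, if (i:ℕ) < (j:ℕ) then k i else 0) ≤ r ∧
                    r < (∑ i : Fin n, if (i:ℕ) < (j:ℕ) then k i else 0) + k j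
                  then (1:ℝ) else 0) *
                 (if (∑ i : Fin n, if (i:ℕ) < (j:ℕ) then k' i else 0) ≤ r ∧
                    r < (∑ i : Fin n, if (i:ℕ) < (j:ℕ) then k' i else 0) + k' j
                  then (1:ℝ) else 0)) N
          _ = _ := by
              apply Finset.sum_congr rfl
              intro r _
              rw [ite_zero_mul_ite_zero, mul_one]
      set Ij := ∑ r ∈ Finset.range N,
              (if ((∑ i : Fin n, if (i:ℕ) < (j:ℕ) then k i else 0) ≤ r ∧
                    r < (∑ i : Fin n, if (i:ℕ) < (j:ℕ) then k i else 0) + k j) ∧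
                  ((∑ i : Fin n, if (i:ℕ) < (j:ℕ) then k' i else 0) ≤ r ∧
                    r < (∑ i : Fin n, if (i:ℕ) < (j:ℕ) then k' i else 0) + k' j)
               then (1:ℝ) else 0) with hIj
      have hI0 : 0 ≤ Ij := by
        rw [hIj]
        apply Finset.sum_nonneg
        intro r _
        split_ifs <;> norm_num
      have hIlb := count_inter N _ (k j) _ (k' j) (hSk j) (hS'k j)
      rw [← hIj] at hIlb
      have hsqN : Real.sqrt N ^ 2 = (N:ℝ) := Real.sq_sqrt hNpos.le
      have ha2 : a^2 * ((k j : ℕ) : ℝ) = 1 := by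
        rw [ha, hk j, mul_pow, inv_pow, inv_pow, hsqN, Real.sq_sqrt (hμpos j).le]
        field_simp
        exact div_self (ne_of_gt (hμpos j))
      have hb2 : b^2 * ((k' j : ℕ) : ℝ) = 1 := by
        rw [hb, hk' j, mul_pow, inv_pow, inv_pow, hsqN, Real.sq_sqrt (hμ'pos j).le]
        field_simp
        exact div_self (ne_of_gt (hμ'pos j))
      have hab : a * b = ((N:ℝ) * Real.sqrt (μ j * μ' j))⁻¹ := by
        rw [ha, hb, Real.sqrt_mul (hμpos j).le]
        rw [show (Real.sqrt N)⁻¹ * (Real.sqrt (μ j))⁻¹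
              * ((Real.sqrt N)⁻¹ * (Real.sqrt (μ' j))⁻¹)
            = ((Real.sqrt N * Real.sqrt N) * (Real.sqrt (μ j) * Real.sqrt (μ' j)))⁻¹ by
          rw [mul_inv, mul_inv, mul_inv]; ring]
        rw [Real.mul_self_sqrt hNpos.le]
      have hcol : ∑ r : Fin N, ((V - V') r j)^2
          = 2 - 2*(Ij / ((N:ℝ) * Real.sqrt (μ j * μ' j))) := by
        calc ∑ r : Fin N, ((V - V') r j)^2
            = ∑ r : Fin N, (a^2 * blockD N n k r j + b^2 * blockD N n k' r j
                - 2*(a*b) * (blockD N n k r j * blockD N n k' r j)) :=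
              Finset.sum_congr rfl fun r _ => hsq r
          _ = a^2 * (∑ r : Fin N, blockD N n k r j)
              + b^2 * (∑ r : Fin N, blockD N n k' r j)
              - 2*(a*b) * (∑ r : Fin N, blockD N n k r j * blockD N n k' r j) := by
              rw [Finset.sum_sub_distrib, Finset.sum_add_distrib,
                Finset.mul_sum, Finset.mul_sum, Finset.mul_sum]
          _ = 1 + 1 - 2*(((N:ℝ) * Real.sqrt (μ j * μ' j))⁻¹ * Ij) := by
              rw [hsum1, hsum2, hcross, ha2, hb2, hab]; ring
          _ = 2 - 2*(Ij / ((N:ℝ) * Real.sqrt (μ j * μ' j))) := by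
              rw [div_eq_mul_inv]; ring
      rw [hcol]
      have hIlb' : (N:ℝ) * min (μ j) (μ' j) - ε * (N:ℝ) * (1 - μ j) ≤ Ij := by
        have hmincast : ((min (k j) (k' j) : ℕ):ℝ) = (N:ℝ) * min (μ j) (μ' j) := by
          rw [Nat.cast_min, hk j, hk' j]
          rcases le_total (μ j) (μ' j) with h | h
          · rw [min_eq_left (by nlinarith), min_eq_left h]; ring
          · rw [min_eq_right (by nlinarith), min_eq_right h]; ring
        rw [hmincast] at hIlb
        linarith [hdiff j]
      exact key_ineq (μ j) (μ' j) μmin ε (εi j) Ij N hNpos hμminpos hμminhalf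
        (hμminle j) (hμle1 j) hε1 (hεi j) (hμ' j) (hμ'pos j) hI0 hIlb'
    calc ∑ j, ∑ r : Fin N, ((V - V') r j)^2
        ≤ ∑ _j : Fin n, 3*ε/μmin := Finset.sum_le_sum colbound
      _ = n * (3*ε/μmin) := by
          rw [Finset.sum_const, Finset.card_univ, Fintype.card_fin, nsmul_eq_mul]
      _ = 3*n/μmin*ε := by ring
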